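/- Let φ_1, …, φ_m be differentiable strictly convex functions and let ũ = (ũ₁,…,ũ_m) be the minimizer of Σ_{i=1}^m φ_i(u_i) over {u₁ ≤ ⋯ ≤ u_m}. Then for any θ₀ ∈ ℝ, the vector (ũ₁ ∧ θ₀, ũ₂ ∧ θ₀, …, ũ_m ∧ θ₀) minimizes Σ_{i=1}^m φ_i(u_i) over {u₁ ≤ ⋯ ≤ u_m ≤ θ₀}. -/

import Mathlib

open Set Filter Topology

/-- Gradient inequality for a convex differentiable function on ℝ. -/
lemma grad_ineq {f f' : ℝ → ℝ} (hc : ConvexOn ℝ Set.univ f)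
    (hd : ∀ x, HasDerivAt f (f' x) x) (x y : ℝ) :
    f x + f' x * (y - x) ≤ f y := by
  rcases lt_trichotomy x y with h | h | h
  · have := hc.le_slope_of_hasDerivAt (mem_univ x) (mem_univ y) h (hd x)
    rw [slope_def_field, le_div_iff₀ (by linarith)] at this
    linarith
  · simp [h]
  · have := hc.slope_le_of_hasDerivAt (mem_univ y) (mem_univ x) h (hd x)
    rw [slope_def_field] at this
    have h2 : f x - f y ≤ f' x * (x - y) := by
      rw [div_le_iff₀ (by linarith)] at this; linarith
    nlinarith

/-- Monotonicity of the derivative of a convex function. -/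
lemma deriv_mono {f f' : ℝ → ℝ} (hc : ConvexOn ℝ Set.univ f)
    (hd : ∀ x, HasDerivAt f (f' x) x) {x y : ℝ} (hxy : x ≤ y) :
    f' x ≤ f' y := by
  rcases eq_or_lt_of_le hxy with rfl | h
  · exact le_refl _
  · have a := grad_ineq hc hd x y
    have b := grad_ineq hc hd y x
    nlinarith [sub_pos.mpr h]

/-- Truncation characterization: if ũ minimizes the separable strictly convex objective
over the monotone cone, then min(ũ, θ₀) (coordinatewise) minimizes it over the cone with
the additional upper bound θ₀. -/
theorem truncated_isotonic_min (m : ℕ) (θ₀ : ℝ) (φ φ' : ℕ → ℝ → ℝ)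
    (hconv : ∀ i ∈ Finset.Icc 1 m, StrictConvexOn ℝ Set.univ (φ i))
    (hderiv : ∀ i ∈ Finset.Icc 1 m, ∀ x : ℝ, HasDerivAt (φ i) (φ' i x) x)
    (utilde : ℕ → ℝ)
    (hmono : ∀ i j, i ∈ Finset.Icc 1 m → j ∈ Finset.Icc 1 m → i ≤ j → utilde i ≤ utilde j)
    (hmin : IsMinOn (fun u : ℕ → ℝ => ∑ i ∈ Finset.Icc 1 m, φ i (u i))
        {u : ℕ → ℝ | ∀ i j, i ∈ Finset.Icc 1 m → j ∈ Finset.Icc 1 m → i ≤ j → u i ≤ u j}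
        utilde) :
    IsMinOn (fun u : ℕ → ℝ => ∑ i ∈ Finset.Icc 1 m, φ i (u i))
        {u : ℕ → ℝ | (∀ i j, i ∈ Finset.Icc 1 m → j ∈ Finset.Icc 1 m → i ≤ j → u i ≤ u j) ∧
          (∀ i ∈ Finset.Icc 1 m, u i ≤ θ₀)}
        (fun i => min (utilde i) θ₀) := by
  rw [isMinOn_iff]
  rintro u ⟨humono, hub⟩
  set c : ℕ → ℝ := fun i => min (utilde i) θ₀ with hcdef
  set d : ℕ → ℝ := fun i => u i - c i with hddef
  -- the perturbed vector utilde + d is monotone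
  have hvmono : ∀ i j, i ∈ Finset.Icc 1 m → j ∈ Finset.Icc 1 m → i ≤ j →
      utilde i + d i ≤ utilde j + d j := by
    intro i j hi hj hij
    have h1 := hmono i j hi hj hij
    have h2 := humono i j hi hj hij
    have h3 : utilde i - c i ≤ utilde j - c j := by
      simp only [hcdef]
      rcases le_total (utilde i) θ₀ with ha | ha <;>
        rcases le_total (utilde j) θ₀ with hb | hb <;>
          simp [min_eq_left, min_eq_right, ha, hb] <;> linarith
    simp only [hddef]; linarith
  set D : ℝ := ∑ i ∈ Finset.Icc 1 m, φ' i (utilde i) * d i with hDdef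
  set g : ℝ → ℝ := fun t => ∑ i ∈ Finset.Icc 1 m, φ i (utilde i + t * d i) with hgdef
  have hg : HasDerivAt g D 0 := by
    apply HasDerivAt.fun_sum
    intro i hi
    have inner : HasDerivAt (fun t : ℝ => utilde i + t * d i) (d i) 0 := by
      simpa using ((hasDerivAt_id (0 : ℝ)).mul_const (d i)).const_add (utilde i)
    have := (hderiv i hi (utilde i + 0 * d i)).comp 0 inner
    simpa [Function.comp_def] using this
  have hg0 : g 0 = ∑ i ∈ Finset.Icc 1 m, φ i (utilde i) := by
    simp [hgdef]
  have hD : 0 ≤ D := by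
    have hslope := hasDerivAt_iff_tendsto_slope.mp hg
    have h2 : Tendsto (slope g 0) (𝓝[>] 0) (𝓝 D) :=
      hslope.mono_left (nhdsWithin_mono 0 (fun t ht => ne_of_gt ht))
    refine ge_of_tendsto h2 ?_
    filter_upwards [Ioc_mem_nhdsGT_of_mem (by simp : (0:ℝ) ∈ Ico (0:ℝ) 1)] with t ht
    obtain ⟨ht0, ht1⟩ := ht
    have hmem : (fun i => utilde i + t * d i) ∈
        {u : ℕ → ℝ | ∀ i j, i ∈ Finset.Icc 1 m → j ∈ Finset.Icc 1 m → i ≤ j → u i ≤ u j} := by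
      intro i j hi hj hij
      have ha := hvmono i j hi hj hij
      have hb := hmono i j hi hj hij
      show utilde i + t * d i ≤ utilde j + t * d j
      nlinarith [mul_le_mul_of_nonneg_left ha (le_of_lt ht0),
        mul_le_mul_of_nonneg_left hb (by linarith : (0:ℝ) ≤ 1 - t)]
    have hmin' := isMinOn_iff.mp hmin _ hmem
    have hgt : g 0 ≤ g t := by rw [hg0]; exact hmin'
    rw [slope_def_field]
    have : (0:ℝ) < t - 0 := by linarith
    apply div_nonneg (by linarith) (by linarith)
  have key : ∀ i ∈ Finset.Icc 1 m, φ i (c i) + φ' i (utilde i) * d i ≤ φ i (u i) := by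
    intro i hi
    have hgrad := grad_ineq (hconv i hi).convexOn (hderiv i hi) (c i) (u i)
    have hstep : φ' i (utilde i) * d i ≤ φ' i (c i) * (u i - c i) := by
      rcases le_total (utilde i) θ₀ with h | h
      · have : c i = utilde i := min_eq_left h
        rw [this]; simp [hddef, this]
      · have hci : c i = θ₀ := min_eq_right h
        have hm : φ' i θ₀ ≤ φ' i (utilde i) :=
          deriv_mono (hconv i hi).convexOn (hderiv i hi) h
        have hd0 : d i ≤ 0 := by
          have := hub i hi
          simp only [hddef, hci]; linarith
        have hdi : u i - c i = d i := by simp [hddef]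
        rw [hdi, hci]
        exact mul_le_mul_of_nonpos_right hm hd0
    simp only [hddef] at hstep ⊢
    linarith
  have hsum : ∑ i ∈ Finset.Icc 1 m, φ i (c i) + D ≤ ∑ i ∈ Finset.Icc 1 m, φ i (u i) := by
    rw [hDdef, ← Finset.sum_add_distrib]
    exact Finset.sum_le_sum key
  show ∑ i ∈ Finset.Icc 1 m, φ i (c i) ≤ ∑ i ∈ Finset.Icc 1 m, φ i (u i)
  linarith
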